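/- Let q₀ and q₁ be positive integers. Define N : ℕ → ℝ by: N m = 0 if m is odd; N m = 2(q₀q₁)^{m/2} − 2q₀^{m/2} if m ≡ 2 (mod 4); and N m = 2(q₀q₁)^{m/2} + 2q₀^{m/2} − 4(q₀q₁)^{m/4} if m ≡ 0 (mod 4). Then for every complex u with |u| < (q₀q₁)^{−1/2}, the series ∑_{m≥1} N m · u^m / m converges absolutely and exp(−∑_{m≥1} N m · u^m / m) = (1 + q₀u²)(1 − q₀q₁u²)/(1 − q₀q₁u⁴). -/

import Mathlib

lemma aux_hasSum (x : ℂ) (hx : ‖x‖ < 1) (d : ℕ) (hd : 0 < d) :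
    HasSum (fun n : ℕ => if n % d = 0 then x ^ (n / d) / ((n / d : ℕ) : ℂ) else 0)
      (-Complex.log (1 - x)) := by
  have h := Complex.hasSum_taylorSeries_neg_log hx
  have hinj : Function.Injective (fun k : ℕ => d * k) := fun a b hab => by
    simpa [hd.ne'] using hab
  rw [← hinj.hasSum_iff]
  · refine h.congr_fun fun k => ?_
    simp [Nat.mul_mod_right, Nat.mul_div_cancel_left _ hd]
  · intro n hn
    have : n % d ≠ 0 := by
      intro h0
      exact hn ⟨n / d, Nat.mul_div_cancel' (Nat.dvd_of_mod_eq_zero h0)⟩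
    simp [this]

lemma aux_summable (x : ℂ) (hx : ‖x‖ < 1) (d : ℕ) (hd : 0 < d) :
    Summable (fun n : ℕ => ‖if n % d = 0 then x ^ (n / d) / ((n / d : ℕ) : ℂ) else 0‖) := by
  have hinj : Function.Injective (fun k : ℕ => d * k) := fun a b hab => by
    simpa [hd.ne'] using hab
  rw [← hinj.summable_iff]
  · refine Summable.of_nonneg_of_le (fun k => norm_nonneg _) (fun k => ?_)
      (summable_geometric_of_lt_one (norm_nonneg x) hx)
    simp only [Function.comp_apply, Nat.mul_mod_right, if_pos,
      Nat.mul_div_cancel_left _ hd]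
    rcases Nat.eq_zero_or_pos k with rfl | hk
    · simp
    · rw [norm_div, norm_pow, Complex.norm_natCast]
      exact div_le_self (by positivity) (by exact_mod_cast hk)
  · intro n hn
    have : n % d ≠ 0 := by
      intro h0
      exact hn ⟨n / d, Nat.mul_div_cancel' (Nat.dvd_of_mod_eq_zero h0)⟩
    simp [this]


/-- The weighted number of closed paths of length `m` in a Nagao ray of period
two with alternating valencies `q₀ + 1` and `q₁ + 1`. -/
noncomputable def stmt9N (q₀ q₁ : ℕ) (m : ℕ) : ℝ :=
  if m % 2 = 1 then 0
  else if m % 4 = 2 then 2 * ((q₀ : ℝ) * (q₁ : ℝ)) ^ (m / 2) - 2 * (q₀ : ℝ) ^ (m / 2)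
  else 2 * ((q₀ : ℝ) * (q₁ : ℝ)) ^ (m / 2) + 2 * (q₀ : ℝ) ^ (m / 2)
    - 4 * ((q₀ : ℝ) * (q₁ : ℝ)) ^ (m / 4)

lemma aux_pointwise (q₀ q₁ : ℕ) (u : ℂ) (n : ℕ) :
    (stmt9N q₀ q₁ n : ℂ) * u ^ n / n =
      (if n % 2 = 0 then ((q₀ : ℂ) * (q₁ : ℂ) * u ^ 2) ^ (n / 2) / ((n / 2 : ℕ) : ℂ) else 0)
      + (if n % 2 = 0 then (-((q₀ : ℂ) * u ^ 2)) ^ (n / 2) / ((n / 2 : ℕ) : ℂ) else 0)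
      - (if n % 4 = 0 then ((q₀ : ℂ) * (q₁ : ℂ) * u ^ 4) ^ (n / 4) / ((n / 4 : ℕ) : ℂ) else 0) := by
  rcases (show n % 2 = 1 ∨ n % 4 = 2 ∨ (n % 4 = 0 ∧ n ≠ 0) ∨ n = 0 by omega) with
    h | h | ⟨h, h0⟩ | rfl
  · have h2 : ¬ n % 2 = 0 := by omega
    have h4 : ¬ n % 4 = 0 := by omega
    simp [stmt9N, h, h2, h4]
  · have h1 : ¬ n % 2 = 1 := by omega
    have h2 : n % 2 = 0 := by omega
    have h4 : ¬ n % 4 = 0 := by omega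
    obtain ⟨k, rfl⟩ : ∃ k, n = 2 * k := ⟨n / 2, by omega⟩
    have hk : (2 * k) / 2 = k := by omega
    have hodd : Odd k := ⟨k / 2, by omega⟩
    have hk0 : (k : ℂ) ≠ 0 := by
      have : k ≠ 0 := by omega
      exact_mod_cast this
    rw [stmt9N, if_neg h1, if_pos h, if_pos h2, if_pos h2, if_neg h4, hk]
    rw [hodd.neg_pow, pow_mul, mul_pow, mul_pow, mul_pow]
    push_cast
    field_simp
    ring
  · have h1 : ¬ n % 2 = 1 := by omega
    have h2 : n % 2 = 0 := by omega
    have h42 : ¬ n % 4 = 2 := by omega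
    obtain ⟨j, rfl⟩ : ∃ j, n = 4 * j := ⟨n / 4, by omega⟩
    have hj2 : (4 * j) / 2 = 2 * j := by omega
    have hj4 : (4 * j) / 4 = j := by omega
    have hj0 : (j : ℂ) ≠ 0 := by
      have : j ≠ 0 := by omega
      exact_mod_cast this
    rw [stmt9N, if_neg h1, if_neg h42, if_pos h2, if_pos h2, if_pos h, hj2, hj4]
    rw [Even.neg_pow ⟨j, by ring⟩]
    have hu1 : u ^ (4 * j) = (u ^ 2) ^ (2 * j) := by rw [← pow_mul]; ring_nf
    have hu2 : (u ^ 4) ^ j = (u ^ 2) ^ (2 * j) := by rw [← pow_mul, ← pow_mul]; ring_nf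
    simp only [mul_pow]
    rw [hu1, hu2]
    push_cast
    field_simp
    ring
  · simp [stmt9N]

set_option maxHeartbeats 1000000 in
/-- for `|u| < (q₀q₁)^{-1/2}` the series `∑_{m ≥ 1} N_m u^m / m`
converges absolutely and
`exp(-∑_{m ≥ 1} N_m u^m / m) = (1 + q₀u²)(1 - q₀q₁u²)/(1 - q₀q₁u⁴)`. -/
theorem stmt9 (q₀ q₁ : ℕ) (h₀ : 0 < q₀) (h₁ : 0 < q₁) (u : ℂ)
    (hu : ‖u‖ < 1 / Real.sqrt ((q₀ : ℝ) * (q₁ : ℝ))) :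
    Summable (fun m : ℕ =>
      ‖(stmt9N q₀ q₁ (m + 1) : ℂ) * u ^ (m + 1) / (m + 1)‖) ∧
    Complex.exp (-(∑' m : ℕ, (stmt9N q₀ q₁ (m + 1) : ℂ) * u ^ (m + 1) / (m + 1)))
      = (1 + (q₀ : ℂ) * u ^ 2) * (1 - (q₀ : ℂ) * (q₁ : ℂ) * u ^ 2)
        / (1 - (q₀ : ℂ) * (q₁ : ℂ) * u ^ 4) := by
  set x : ℂ := (q₀ : ℂ) * (q₁ : ℂ) * u ^ 2 with hxdef
  set y : ℂ := -((q₀ : ℂ) * u ^ 2) with hydef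
  set z : ℂ := (q₀ : ℂ) * (q₁ : ℂ) * u ^ 4 with hzdef
  -- norm estimates
  have hQ1 : (1 : ℝ) ≤ (q₀ : ℝ) * (q₁ : ℝ) := by
    have : 1 ≤ q₀ * q₁ := Nat.one_le_iff_ne_zero.mpr (by positivity)
    exact_mod_cast this
  have hQ0 : (0 : ℝ) < (q₀ : ℝ) * (q₁ : ℝ) := by linarith
  have hq0 : (q₀ : ℝ) ≤ (q₀ : ℝ) * (q₁ : ℝ) := by
    nlinarith [show (1:ℝ) ≤ (q₁:ℝ) by exact_mod_cast h₁, show (0:ℝ) ≤ (q₀:ℝ) by positivity]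
  have hsq : Real.sqrt ((q₀ : ℝ) * (q₁ : ℝ)) > 0 := Real.sqrt_pos.mpr hQ0
  have hu2 : ‖u‖ ^ 2 * ((q₀ : ℝ) * (q₁ : ℝ)) < 1 := by
    have h1' : ‖u‖ < 1 / Real.sqrt ((q₀ : ℝ) * (q₁ : ℝ)) := by
      exact hu
    have h2' : ‖u‖ ^ 2 < (1 / Real.sqrt ((q₀ : ℝ) * (q₁ : ℝ))) ^ 2 := by
      apply sq_lt_sq' _ h1'
      have := norm_nonneg u
      linarith
    rw [div_pow, one_pow, Real.sq_sqrt hQ0.le] at h2'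
    rw [← lt_div_iff₀ hQ0]
    simpa using h2'
  have hu1 : ‖u‖ ^ 2 ≤ 1 := by nlinarith [sq_nonneg ‖u‖]
  have hx : ‖x‖ < 1 := by
    rw [hxdef, norm_mul, norm_mul, norm_pow, Complex.norm_natCast, Complex.norm_natCast]
    nlinarith
  have hy : ‖y‖ < 1 := by
    rw [hydef, norm_neg, norm_mul, norm_pow, Complex.norm_natCast]
    nlinarith [sq_nonneg ‖u‖]
  have hz : ‖z‖ < 1 := by
    rw [hzdef, norm_mul, norm_mul, norm_pow, Complex.norm_natCast, Complex.norm_natCast]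
    have : ‖u‖ ^ 4 = ‖u‖ ^ 2 * ‖u‖ ^ 2 := by ring
    rw [this]
    nlinarith [sq_nonneg ‖u‖]
  have hA := aux_hasSum x hx 2 (by norm_num)
  have hB := aux_hasSum y hy 2 (by norm_num)
  have hC := aux_hasSum z hz 4 (by norm_num)
  set F : ℕ → ℂ := fun n => (stmt9N q₀ q₁ n : ℂ) * u ^ n / n with hFdef
  have hF : HasSum F
      (-Complex.log (1 - x) + -Complex.log (1 - y) - -Complex.log (1 - z)) := by
    refine ((hA.add hB).sub hC).congr_fun fun n => ?_
    simp only [hFdef, hxdef, hydef, hzdef]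
    exact aux_pointwise q₀ q₁ u n
  have hF0 : F 0 = 0 := by simp [hFdef]
  have hFs : HasSum (fun m => F (m + 1))
      (-Complex.log (1 - x) + -Complex.log (1 - y) - -Complex.log (1 - z)) := by
    refine (hasSum_nat_add_iff 1).mpr ?_
    simpa [hF0] using hF
  have hfun : (fun m : ℕ => (stmt9N q₀ q₁ (m + 1) : ℂ) * u ^ (m + 1) / (m + 1))
      = fun m => F (m + 1) := by
    funext m
    simp only [hFdef]
    push_cast
    ring
  have hne : ∀ w : ℂ, ‖w‖ < 1 → 1 - w ≠ 0 := by
    intro w hw h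
    rw [sub_eq_zero] at h
    rw [← h] at hw
    simp at hw
  constructor
  · -- summability
    have hsum : Summable (fun n : ℕ => ‖F n‖) := by
      refine Summable.of_nonneg_of_le (fun n => norm_nonneg _) (fun n => ?_)
        (((aux_summable x hx 2 (by norm_num)).add (aux_summable y hy 2 (by norm_num))).add
          (aux_summable z hz 4 (by norm_num)))
      have tri : ∀ a b c : ℂ, ‖a + b - c‖ ≤ ‖a‖ + ‖b‖ + ‖c‖ := fun a b c =>
        (norm_sub_le _ _).trans (add_le_add_left (norm_add_le a b) _)
      simp only [hFdef]
      rw [aux_pointwise q₀ q₁ u n]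
      simp only [← hxdef, ← hydef, ← hzdef]
      exact tri _ _ _
    have hsum1 : Summable (fun m : ℕ => ‖F (m + 1)‖) := (summable_nat_add_iff 1).mpr hsum
    refine hsum1.congr fun m => ?_
    congr 1
    simp only [hFdef]
    push_cast
    ring
  · rw [hfun, hFs.tsum_eq]
    have : -(-Complex.log (1 - x) + -Complex.log (1 - y) - -Complex.log (1 - z))
        = Complex.log (1 - x) + Complex.log (1 - y) - Complex.log (1 - z) := by ring
    rw [this, Complex.exp_sub, Complex.exp_add, Complex.exp_log (hne x hx),
      Complex.exp_log (hne y hy), Complex.exp_log (hne z hz)]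
    rw [hxdef, hydef, hzdef]
    ring
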